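/- Let k be a field of characteristic 2, K = k(s) the field of rational functions, and M the k[x,y]/(x²,y²)-module with basis {u_i, v_i : i ≥ 0} and action x·u_i = v_i, y·u_i = v_{i−1} (v_{−1}=0), x·v_i = y·v_i = 0. Then on M_K = K ⊗_k M, the kernel of multiplication by x + sy equals the image of multiplication by x + sy, namely the K-span of {v_i : i ≥ 0}. -/

import Mathlib

set_option maxHeartbeats 1000000

open TensorProduct

/-- The underlying space of the Klein-four module `M` with basis `{uᵢ, vᵢ : i ≥ 0}`. -/
abbrev KleinM (k : Type*) [Field k] := ((ℕ →₀ k) × (ℕ →₀ k))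

/-- Multiplication by `x`: `x·uᵢ = vᵢ`, `x·vᵢ = 0`. -/
noncomputable def opX (k : Type*) [Field k] : KleinM k →ₗ[k] KleinM k :=
  (LinearMap.inr k (ℕ →₀ k) (ℕ →₀ k)).comp (LinearMap.fst k (ℕ →₀ k) (ℕ →₀ k))

/-- Multiplication by `y`: `y·uᵢ = vᵢ₋₁` (with `v₋₁ = 0`), `y·vᵢ = 0`. -/
noncomputable def opY (k : Type*) [Field k] : KleinM k →ₗ[k] KleinM k :=
  ((LinearMap.inr k (ℕ →₀ k) (ℕ →₀ k)).comp
    (Finsupp.lcomapDomain (fun n => n + 1) (add_left_injective 1))).comp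
    (LinearMap.fst k (ℕ →₀ k) (ℕ →₀ k))

section Aux

variable (k : Type*) [Field k]

/-- The map `f ↦ f + X • (shift f)` on `ℕ →₀ k(s)`. -/
noncomputable def auxF : (ℕ →₀ RatFunc k) →ₗ[RatFunc k] (ℕ →₀ RatFunc k) :=
  LinearMap.id + (RatFunc.X : RatFunc k) •
    Finsupp.lcomapDomain (fun n => n + 1) (add_left_injective 1)

lemma auxF_apply (f : ℕ →₀ RatFunc k) (n : ℕ) :
    auxF k f n = f n + RatFunc.X * f (n + 1) := by
  simp [auxF, Finsupp.lcomapDomain, Finsupp.comapDomain]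

lemma auxF_inj : Function.Injective (auxF k) := by
  rw [injective_iff_map_eq_zero]
  intro f hf
  have h : ∀ n, f n = -(RatFunc.X * f (n + 1)) := by
    intro n
    have := congrArg (fun g => g n) hf
    simp only [auxF_apply, Finsupp.coe_zero, Pi.zero_apply] at this
    exact eq_neg_of_add_eq_zero_left this
  set N := f.support.sup id with hNdef
  have hbig : ∀ m, N + 1 ≤ m → f m = 0 := by
    intro m hm
    by_contra hne
    have : m ∈ f.support := Finsupp.mem_support_iff.mpr hne
    have : m ≤ N := Finset.le_sup (f := id) this
    omega
  have key : ∀ d m, N + 1 ≤ m + d → f m = 0 := by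
    intro d
    induction d with
    | zero => intro m hm; exact hbig m (by omega)
    | succ d ih =>
        intro m hm
        rcases le_or_gt (N + 1) m with h' | h'
        · exact hbig m h'
        · have h1 : f (m + 1) = 0 := ih (m + 1) (by omega)
          rw [h m, h1, mul_zero, neg_zero]
  ext n
  simpa using key (N + 1) n (by omega)

lemma auxF_surj : Function.Surjective (auxF k) := by
  intro g
  set N := g.support.sup id + 1 with hNdef
  have hbig : ∀ m, N ≤ m → g m = 0 := by
    intro m hm
    by_contra hne
    have : m ∈ g.support := Finsupp.mem_support_iff.mpr hne
    have : m ≤ g.support.sup id := Finset.le_sup (f := id) this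
    omega
  set a : ℕ → RatFunc k := fun n => (-RatFunc.X) ^ n * g n with hadef
  set func : ℕ → RatFunc k :=
    fun n => ∑ j ∈ Finset.range N, (-RatFunc.X) ^ j * g (n + j) with hfdef
  have hfunc0 : ∀ n, N ≤ n → func n = 0 := by
    intro n hn
    apply Finset.sum_eq_zero
    intro j _
    rw [hbig (n + j) (by omega), mul_zero]
  refine ⟨Finsupp.onFinset (Finset.range N) func ?_, ?_⟩
  · intro n hn
    simp only [Finset.mem_range]
    by_contra h'
    exact hn (hfunc0 n (by omega))
  · ext n
    rw [auxF_apply]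
    simp only [Finsupp.onFinset_apply]
    have h2 : RatFunc.X * func (n + 1) =
        -∑ j ∈ Finset.range N, (-RatFunc.X) ^ (j + 1) * g (n + (j + 1)) := by
      rw [hfdef, Finset.mul_sum, ← Finset.sum_neg_distrib]
      apply Finset.sum_congr rfl
      intro j _
      have : n + 1 + j = n + (j + 1) := by omega
      rw [this, pow_succ, ← neg_mul_comm]
      ring
    rw [h2, hfdef]
    have h3 : ∑ j ∈ Finset.range N, (-RatFunc.X) ^ (j + 1) * g (n + (j + 1)) =
        (∑ j ∈ Finset.range (N + 1), (-RatFunc.X) ^ j * g (n + j))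
          - (-RatFunc.X) ^ 0 * g (n + 0) := by
      rw [Finset.sum_range_succ' (fun j => (-RatFunc.X) ^ j * g (n + j)) N]
      ring
    rw [h3, Finset.sum_range_succ]
    have h4 : g (n + N) = 0 := hbig _ (by omega)
    rw [h4]
    simp

end Aux

/-- On `M_K = K ⊗_k M`, with `K = k(s)`, the kernel of multiplication by `x + sy` equals its
image, namely the `K`-span of the `vᵢ`. -/
theorem stmt11 (k : Type*) [Field k] [CharP k 2] :
    LinearMap.ker ((opX k).baseChange (RatFunc k) +
        (RatFunc.X : RatFunc k) • (opY k).baseChange (RatFunc k)) =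
      LinearMap.range ((opX k).baseChange (RatFunc k) +
        (RatFunc.X : RatFunc k) • (opY k).baseChange (RatFunc k)) ∧
    LinearMap.range ((opX k).baseChange (RatFunc k) +
        (RatFunc.X : RatFunc k) • (opY k).baseChange (RatFunc k)) =
      LinearMap.range ((LinearMap.inr k (ℕ →₀ k) (ℕ →₀ k)).baseChange (RatFunc k)) := by
  set T := (opX k).baseChange (RatFunc k) + (RatFunc.X : (RatFunc k)) • (opY k).baseChange (RatFunc k) with hT
  set fsR := TensorProduct.finsuppScalarRight k k (RatFunc k) ℕ with hfsR
  set e : ((RatFunc k) ⊗[k] KleinM k) ≃ₗ[k] ((ℕ →₀ (RatFunc k)) × (ℕ →₀ (RatFunc k))) :=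
    (TensorProduct.prodRight k k (RatFunc k) (ℕ →₀ k) (ℕ →₀ k)).trans (fsR.prodCongr fsR) with he
  -- the conjugated operator
  have hTe : ∀ x : (RatFunc k) ⊗[k] KleinM k, e (T x) = (0, auxF k (e x).1) := by
    have hcomp : e.toLinearMap ∘ₗ (T.restrictScalars k) =
        (((LinearMap.inr (RatFunc k) (ℕ →₀ (RatFunc k)) (ℕ →₀ (RatFunc k))) ∘ₗ auxF k ∘ₗ
          (LinearMap.fst (RatFunc k) (ℕ →₀ (RatFunc k)) (ℕ →₀ (RatFunc k)))).restrictScalars k) ∘ₗ e.toLinearMap := by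
      apply TensorProduct.ext'
      intro a m
      obtain ⟨f, g⟩ := m
      simp only [LinearMap.coe_comp, LinearMap.coe_restrictScalars, Function.comp_apply,
        LinearEquiv.coe_coe, hT, LinearMap.add_apply, LinearMap.smul_apply,
        LinearMap.baseChange_tmul, map_add, map_smul]
      have hX : (opX k) (f, g) = (0, f) := rfl
      have hY : (opY k) (f, g) =
          (0, Finsupp.comapDomain (fun n => n + 1) f (Function.Injective.injOn (add_left_injective 1))) := rfl
      rw [hX, hY, TensorProduct.smul_tmul']
      have heval : ∀ (b : (RatFunc k)) (p q : ℕ →₀ k), e (b ⊗ₜ[k] (p, q)) = (fsR (b ⊗ₜ p), fsR (b ⊗ₜ q)) := by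
        intro b p q
        simp [he, TensorProduct.prodRight_tmul, LinearEquiv.prodCongr_apply]
      rw [heval, heval]
      ext n <;>
      simp only [Prod.fst_add, Prod.snd_add, Prod.smul_fst, Prod.smul_snd,
        LinearMap.coe_comp, Function.comp_apply, LinearMap.fst_apply, LinearMap.inr_apply,
        Finsupp.coe_add, Pi.add_apply, Finsupp.coe_smul, Pi.smul_apply, smul_eq_mul,
        map_zero, Finsupp.coe_zero, Pi.zero_apply, add_zero, zero_add]
      · have hz := (TensorProduct.finsuppScalarRight k k (RatFunc k) ℕ).map_zero
        simp [hfsR, hz]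
      · rw [auxF_apply, heval]
        simp only [hfsR, TensorProduct.finsuppScalarRight_apply_tmul_apply,
          Finsupp.comapDomain_apply]
        rw [mul_smul_comm]
    intro x
    have := congrArg (fun φ => φ x) hcomp
    simpa using this
  have hInr : ∀ t : (RatFunc k) ⊗[k] (ℕ →₀ k),
      e ((LinearMap.inr k (ℕ →₀ k) (ℕ →₀ k)).baseChange (RatFunc k) t) = (0, fsR t) := by
    have hcomp : e.toLinearMap ∘ₗ
        (((LinearMap.inr k (ℕ →₀ k) (ℕ →₀ k)).baseChange (RatFunc k)).restrictScalars k) =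
        (LinearMap.inr k (ℕ →₀ (RatFunc k)) (ℕ →₀ (RatFunc k))) ∘ₗ fsR.toLinearMap := by
      apply TensorProduct.ext'
      intro a p
      simp only [LinearMap.coe_comp, LinearMap.coe_restrictScalars, Function.comp_apply,
        LinearEquiv.coe_coe, LinearMap.baseChange_tmul, LinearMap.inr_apply]
      simp only [he, hfsR, LinearEquiv.trans_apply, TensorProduct.prodRight_tmul,
        LinearEquiv.prodCongr_apply, TensorProduct.tmul_zero, map_zero]
    intro t
    have := congrArg (fun φ => φ t) hcomp
    simpa using this
  -- characterizations
  have hker : ∀ x : (RatFunc k) ⊗[k] KleinM k, x ∈ LinearMap.ker T ↔ (e x).1 = 0 := by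
    intro x
    rw [LinearMap.mem_ker]
    constructor
    · intro hx
      have h := hTe x
      rw [hx, e.map_zero] at h
      have h1 : auxF k (e x).1 = 0 := by
        have h2 := congrArg Prod.snd h
        simpa using h2.symm
      have h3 : auxF k (e x).1 = auxF k 0 := by rw [(auxF k).map_zero]; exact h1
      exact auxF_inj k h3
    · intro hx
      apply e.injective
      rw [hTe x, hx, e.map_zero, (auxF k).map_zero]
      exact Prod.ext rfl rfl
  have hrange : ∀ x : (RatFunc k) ⊗[k] KleinM k, x ∈ LinearMap.range T ↔ (e x).1 = 0 := by
    intro x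
    rw [LinearMap.mem_range]
    constructor
    · rintro ⟨y, rfl⟩
      have := hTe y
      exact congrArg Prod.fst this
    · intro hx
      obtain ⟨f0, hf0⟩ := auxF_surj k (e x).2
      refine ⟨e.symm (f0, 0), ?_⟩
      apply e.injective
      rw [hTe]
      simp only [LinearEquiv.apply_symm_apply, hf0]
      exact Prod.ext hx.symm rfl
  have hrangeInr : ∀ x : (RatFunc k) ⊗[k] KleinM k,
      x ∈ LinearMap.range ((LinearMap.inr k (ℕ →₀ k) (ℕ →₀ k)).baseChange (RatFunc k)) ↔
      (e x).1 = 0 := by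
    intro x
    rw [LinearMap.mem_range]
    constructor
    · rintro ⟨t, rfl⟩
      exact congrArg Prod.fst (hInr t)
    · intro hx
      refine ⟨fsR.symm (e x).2, ?_⟩
      apply e.injective
      rw [hInr]
      simp only [LinearEquiv.apply_symm_apply]
      exact Prod.ext hx.symm rfl
  constructor
  · ext x
    rw [hker x, hrange x]
  · ext x
    rw [hrange x, hrangeInr x]
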